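/- Fix α ∈ (0,1), a > 0, T ∈ ℕ with T ≥ 1, real numbers A ≤ B, outcomes y_1, …, y_T ∈ [A, B], and vectors x_1, …, x_T ∈ ℝ^{p+1} with ‖x_t‖_∞ ≤ max(1, B) for all t. Let L̃_T^θ = Σ_{t=1}^{T} λ_α(y_t, min(max(x_t'θ, A), B)) denote the cumulative truncated pinball loss of θ and L_T^θ = Σ_{t=1}^{T} λ_α(y_t, x_t'θ) the cumulative (untruncated) pinball loss. Suppose a real number L_T (the learner's cumulative loss) satisfies the bound L_T ≤ √T·( −ln( (a/2)^{p+1} · ∫_{ℝ^{p+1}} exp(−L̃_T^θ/√T − a‖θ‖₁) dθ ) + (B − A)² ). Then for every θ ∈ ℝ^{p+1}: L_T ≤ L_T^θ + √T·a‖θ‖₁ + √T·( (p+1)·ln(1 + (√T/a)·max(1, B)) + (B − A)² ), and consequently the average regret (L_T − L_T^θ)/T is at most (1/√T)·a‖θ‖₁ + (1/√T)·( (p+1)·ln(1 + (√T/a)·max(1, B)) + (B − A)² ). -/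

import Mathlib

open MeasureTheory

/-- The pinball loss at level `α`: `λ_α(y, γ) = α(y − γ)` if `y ≥ γ` and
`(1 − α)(γ − y)` if `y < γ`. -/
noncomputable def pinball (α y γ : ℝ) : ℝ :=
  if γ ≤ y then α * (y - γ) else (1 - α) * (γ - y)

lemma pinball_eq_max {α : ℝ} (hα : α ∈ Set.Ioo (0 : ℝ) 1) (y γ : ℝ) :
    pinball α y γ = max (α * (y - γ)) ((1 - α) * (γ - y)) := by
  obtain ⟨h0, h1⟩ := hα
  unfold pinball
  rcases le_or_gt γ y with h | h
  · rw [if_pos h, max_eq_left (by nlinarith)]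
  · rw [if_neg (not_le.mpr h), max_eq_right (by nlinarith)]

lemma pinball_nonneg {α : ℝ} (hα : α ∈ Set.Ioo (0 : ℝ) 1) (y γ : ℝ) :
    0 ≤ pinball α y γ := by
  obtain ⟨h0, h1⟩ := hα
  unfold pinball
  split <;> rename_i h
  · nlinarith
  · push_neg at h; nlinarith

lemma pinball_lipschitz {α : ℝ} (hα : α ∈ Set.Ioo (0 : ℝ) 1) (y γ γ' : ℝ) :
    pinball α y γ ≤ pinball α y γ' + |γ - γ'| := by
  obtain ⟨h0, h1⟩ := hα
  rw [pinball_eq_max ⟨h0, h1⟩ y γ, pinball_eq_max ⟨h0, h1⟩ y γ']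
  have habs := abs_nonneg (γ - γ')
  rcases abs_cases (γ - γ') with ⟨he, _⟩ | ⟨he, _⟩ <;>
  · apply max_le
    · calc α * (y - γ) = α * (y - γ') + α * (γ' - γ) := by ring
        _ ≤ max (α * (y - γ')) ((1 - α) * (γ' - y)) + |γ - γ'| :=
          add_le_add (le_max_left _ _) (by nlinarith)
    · calc (1 - α) * (γ - y) = (1 - α) * (γ' - y) + (1 - α) * (γ - γ') := by ring
        _ ≤ max (α * (y - γ')) ((1 - α) * (γ' - y)) + |γ - γ'| :=
          add_le_add (le_max_right _ _) (by nlinarith)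

lemma pinball_clamp_le {α A B y : ℝ} (hα : α ∈ Set.Ioo (0 : ℝ) 1)
    (hyA : A ≤ y) (hyB : y ≤ B) (γ : ℝ) :
    pinball α y (min (max γ A) B) ≤ pinball α y γ := by
  obtain ⟨h0, h1⟩ := hα
  have hRnn : 0 ≤ pinball α y γ := pinball_nonneg ⟨h0, h1⟩ y γ
  rw [pinball_eq_max ⟨h0, h1⟩ y (min (max γ A) B)]
  have hc1 : min γ y ≤ min (max γ A) B :=
    le_min ((min_le_left γ y).trans (le_max_left _ _)) ((min_le_right γ y).trans hyB)
  have hc2 : min (max γ A) B ≤ max γ y :=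
    (min_le_left _ _).trans (max_le (le_max_left _ _) (hyA.trans (le_max_right _ _)))
  rw [pinball_eq_max ⟨h0, h1⟩ y γ]
  apply max_le
  · rcases min_cases γ y with ⟨h, _⟩ | ⟨h, _⟩
    · refine le_trans ?_ (le_max_left (α * (y - γ)) _)
      rw [h] at hc1; nlinarith
    · rw [h] at hc1
      have : α * (y - min (max γ A) B) ≤ 0 := by nlinarith
      exact this.trans (by rw [← pinball_eq_max ⟨h0, h1⟩]; exact hRnn)
  · rcases max_cases γ y with ⟨h, _⟩ | ⟨h, _⟩
    · refine le_trans ?_ (le_max_right (α * (y - γ)) _)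
      rw [h] at hc2; nlinarith
    · rw [h] at hc2
      have : (1 - α) * (min (max γ A) B - y) ≤ 0 := by nlinarith
      exact this.trans (by rw [← pinball_eq_max ⟨h0, h1⟩]; exact hRnn)

lemma integrable_exp_neg_mul_abs_aux {b : ℝ} (hb : 0 < b) :
    Integrable (fun u : ℝ => Real.exp (-b * |u|)) := by
  have h1 : IntegrableOn (fun u : ℝ => Real.exp (-b * |u|)) (Set.Ioi 0) := by
    refine (exp_neg_integrableOn_Ioi 0 hb).congr_fun (fun u hu => ?_) measurableSet_Ioi
    rw [abs_of_pos (by exact hu)]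
  have h2 : IntegrableOn (fun u : ℝ => Real.exp (-b * |u|)) (Set.Iic 0) := by
    rw [← (Measure.measurePreserving_neg (volume : Measure ℝ)).integrableOn_comp_preimage
        (Homeomorph.neg ℝ).measurableEmbedding]
    have hpre : ((fun x : ℝ => -x) ⁻¹' Set.Iic (0 : ℝ)) = Set.Ici (0 : ℝ) := by
      ext u; simp
    simp only [Function.comp_def, abs_neg, hpre]
    exact Iff.mpr integrableOn_Ici_iff_integrableOn_Ioi h1
  have := h2.union h1
  rwa [Set.Iic_union_Ioi, integrableOn_univ] at this

lemma integral_exp_neg_mul_abs_aux {b : ℝ} (hb : 0 < b) :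
    (∫ u : ℝ, Real.exp (-b * |u|)) = 2 / b := by
  have h0 : (∫ u : ℝ, Real.exp (-b * |u|)) = 2 * ∫ x in Set.Ioi (0 : ℝ), Real.exp (-b * x) :=
    integral_comp_abs (f := fun v => Real.exp (-b * v))
  have h1 : (∫ x in Set.Ioi (0 : ℝ), Real.exp (-b * x)) = b⁻¹ := by
    have h := integral_comp_mul_left_Ioi (fun v => Real.exp (-v)) 0 hb
    simp only [mul_zero, neg_mul] at h ⊢
    rw [h, integral_exp_neg_Ioi_zero, smul_eq_mul, mul_one]
  rw [h0, h1]
  ring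

theorem regret_bound_of_waa_guarantee {p : ℕ} (α a A B : ℝ)
    (hα : α ∈ Set.Ioo (0 : ℝ) 1) (ha : 0 < a) (hAB : A ≤ B)
    (T : ℕ) (hT : 1 ≤ T)
    (y : ℕ → ℝ) (hy : ∀ t ∈ Finset.Icc 1 T, y t ∈ Set.Icc A B)
    (x : ℕ → Fin (p + 1) → ℝ)
    (hx : ∀ t ∈ Finset.Icc 1 T, ∀ i, |x t i| ≤ max 1 B)
    (LT : ℝ)
    (hLT : LT ≤ Real.sqrt T *
        (-Real.log ((a / 2) ^ (p + 1) *
            ∫ θ : Fin (p + 1) → ℝ,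
              Real.exp (-(∑ t ∈ Finset.Icc 1 T,
                  pinball α (y t) (min (max (∑ i, x t i * θ i) A) B)) / Real.sqrt T
                - a * ∑ i, |θ i|))
          + (B - A) ^ 2)) :
    ∀ θ : Fin (p + 1) → ℝ,
      LT ≤ (∑ t ∈ Finset.Icc 1 T, pinball α (y t) (∑ i, x t i * θ i))
          + Real.sqrt T * (a * ∑ i, |θ i|)
          + Real.sqrt T *
              ((p + 1 : ℝ) * Real.log (1 + Real.sqrt T / a * max 1 B) + (B - A) ^ 2)
        ∧
      (LT - ∑ t ∈ Finset.Icc 1 T, pinball α (y t) (∑ i, x t i * θ i)) / T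
        ≤ (1 / Real.sqrt T) * (a * ∑ i, |θ i|)
          + (1 / Real.sqrt T) *
              ((p + 1 : ℝ) * Real.log (1 + Real.sqrt T / a * max 1 B) + (B - A) ^ 2) := by
  intro θ
  set M : ℝ := max 1 B with hM
  have hM1 : (1 : ℝ) ≤ M := le_max_left _ _
  have hM0 : (0 : ℝ) < M := lt_of_lt_of_le one_pos hM1
  have hT0 : (0 : ℝ) < T := by exact_mod_cast Nat.lt_of_lt_of_le Nat.zero_lt_one hT
  have hsT : 0 < Real.sqrt T := Real.sqrt_pos.mpr hT0
  set b : ℝ := Real.sqrt T * M + a with hbdef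
  have hb0 : 0 < b := by positivity
  have hTs : Real.sqrt T * Real.sqrt T = (T : ℝ) := Real.mul_self_sqrt hT0.le
  set Lθ : ℝ := ∑ t ∈ Finset.Icc 1 T, pinball α (y t) (∑ i, x t i * θ i) with hLθ
  set nθ : ℝ := ∑ i, |θ i| with hnθ
  set C : ℝ := Real.exp (-(Lθ / Real.sqrt T + a * nθ)) with hC
  have hC0 : 0 < C := Real.exp_pos _
  set f : (Fin (p + 1) → ℝ) → ℝ := fun φ =>
    Real.exp (-(∑ t ∈ Finset.Icc 1 T,
        pinball α (y t) (min (max (∑ i, x t i * φ i) A) B)) / Real.sqrt T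
      - a * ∑ i, |φ i|) with hf
  set g : (Fin (p + 1) → ℝ) → ℝ := fun φ =>
    C * ∏ i, Real.exp (-b * |φ i - θ i|) with hg
  -- pointwise bound g ≤ f
  have hge : ∀ φ, g φ ≤ f φ := by
    intro φ
    set Δ : ℝ := ∑ i, |φ i - θ i| with hΔ
    have hΔ0 : 0 ≤ Δ := Finset.sum_nonneg fun i _ => abs_nonneg _
    have hgφ : g φ = C * Real.exp (-b * Δ) := by
      show C * ∏ i, Real.exp (-b * |φ i - θ i|) = C * Real.exp (-b * Δ)
      rw [← Real.exp_sum, hΔ, Finset.mul_sum]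
    rw [hgφ, hC, ← Real.exp_add, hf]
    apply Real.exp_le_exp.mpr
    -- key losses comparison
    have hloss : (∑ t ∈ Finset.Icc 1 T,
        pinball α (y t) (min (max (∑ i, x t i * φ i) A) B)) ≤ Lθ + (T : ℝ) * M * Δ := by
      have : ∀ t ∈ Finset.Icc 1 T,
          pinball α (y t) (min (max (∑ i, x t i * φ i) A) B)
            ≤ pinball α (y t) (∑ i, x t i * θ i) + M * Δ := by
        intro t ht
        obtain ⟨hyA, hyB⟩ := hy t ht
        have step1 : pinball α (y t) (min (max (∑ i, x t i * φ i) A) B)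
            ≤ pinball α (y t) (min (max (∑ i, x t i * θ i) A) B)
              + |(∑ i, x t i * φ i) - (∑ i, x t i * θ i)| := by
          refine (pinball_lipschitz hα (y t) _ (min (max (∑ i, x t i * θ i) A) B)).trans ?_
          refine add_le_add (le_refl _) ?_
          calc |min (max (∑ i, x t i * φ i) A) B - min (max (∑ i, x t i * θ i) A) B|
              ≤ max |max (∑ i, x t i * φ i) A - max (∑ i, x t i * θ i) A| |B - B| :=
                abs_min_sub_min_le_max _ _ _ _
            _ ≤ |(∑ i, x t i * φ i) - (∑ i, x t i * θ i)| := by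
                apply max_le (abs_max_sub_max_le_abs _ _ _)
                simp [abs_nonneg]
        have step2 : pinball α (y t) (min (max (∑ i, x t i * θ i) A) B)
            ≤ pinball α (y t) (∑ i, x t i * θ i) :=
          pinball_clamp_le hα hyA hyB _
        have step3 : |(∑ i, x t i * φ i) - (∑ i, x t i * θ i)| ≤ M * Δ := by
          rw [← Finset.sum_sub_distrib]
          refine (Finset.abs_sum_le_sum_abs _ _).trans ?_
          rw [hΔ, Finset.mul_sum]
          refine Finset.sum_le_sum fun i _ => ?_
          rw [← mul_sub, abs_mul]
          exact mul_le_mul_of_nonneg_right (hx t ht i) (abs_nonneg _)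
        linarith
      calc (∑ t ∈ Finset.Icc 1 T,
          pinball α (y t) (min (max (∑ i, x t i * φ i) A) B))
          ≤ ∑ t ∈ Finset.Icc 1 T, (pinball α (y t) (∑ i, x t i * θ i) + M * Δ) :=
            Finset.sum_le_sum this
        _ = Lθ + (Finset.Icc 1 T).card * (M * Δ) := by
            rw [Finset.sum_add_distrib, Finset.sum_const, nsmul_eq_mul]
        _ = Lθ + (T : ℝ) * M * Δ := by
            rw [Nat.card_Icc]; push_cast; ring
    have hnorm : (∑ i, |φ i|) ≤ nθ + Δ := by
      rw [hnθ, hΔ, ← Finset.sum_add_distrib]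
      refine Finset.sum_le_sum fun i _ => ?_
      calc |φ i| = |θ i + (φ i - θ i)| := by ring_nf
        _ ≤ |θ i| + |φ i - θ i| := abs_add_le _ _
    have hdiv : (∑ t ∈ Finset.Icc 1 T,
        pinball α (y t) (min (max (∑ i, x t i * φ i) A) B)) / Real.sqrt T
          ≤ Lθ / Real.sqrt T + Real.sqrt T * M * Δ := by
      rw [div_le_iff₀ hsT]
      have heq : (Lθ / Real.sqrt T + Real.sqrt T * M * Δ) * Real.sqrt T
          = Lθ + (T : ℝ) * (M * Δ) := by
        rw [add_mul, div_mul_cancel₀ _ hsT.ne']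
        congr 1
        rw [show Real.sqrt ↑T * M * Δ * Real.sqrt ↑T
            = Real.sqrt ↑T * Real.sqrt ↑T * (M * Δ) from by ring, hTs]
      rw [heq]
      linarith [hloss]
    rw [neg_div]
    have hnorm' := mul_le_mul_of_nonneg_left hnorm ha.le
    rw [mul_add] at hnorm'
    have hbΔ : b * Δ = Real.sqrt T * M * Δ + a * Δ := by rw [hbdef]; ring
    linarith [hdiv, hnorm', hbΔ]
  -- continuity / integrability of f
  have hfc : Continuous f := by
    rw [hf]
    apply Real.continuous_exp.comp
    apply Continuous.sub
    · apply Continuous.div_const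
      apply Continuous.neg
      apply continuous_finset_sum
      intro t _
      have heq : (fun φ : Fin (p + 1) → ℝ =>
          pinball α (y t) (min (max (∑ i, x t i * φ i) A) B))
          = fun φ => max (α * (y t - min (max (∑ i, x t i * φ i) A) B))
              ((1 - α) * (min (max (∑ i, x t i * φ i) A) B - y t)) := by
        funext φ; exact pinball_eq_max hα _ _
      rw [heq]
      fun_prop
    · fun_prop
  have hf_nonneg : ∀ φ, 0 ≤ f φ := fun φ => (Real.exp_pos _).le
  have hdom : Integrable (fun φ : Fin (p + 1) → ℝ => ∏ i, Real.exp (-a * |φ i|)) :=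
    Integrable.fintype_prod (f := fun _ u => Real.exp (-a * |u|))
      (fun _ => integrable_exp_neg_mul_abs_aux ha)
  have hf_int : Integrable f := by
    refine hdom.mono hfc.aestronglyMeasurable (ae_of_all _ fun φ => ?_)
    rw [Real.norm_eq_abs, Real.norm_eq_abs, abs_of_nonneg (hf_nonneg φ),
      abs_of_nonneg (Finset.prod_nonneg fun i _ => (Real.exp_pos _).le)]
    have hp : (∏ i, Real.exp (-a * |φ i|)) = Real.exp (-a * ∑ i, |φ i|) := by
      rw [← Real.exp_sum, Finset.mul_sum]
    rw [hp, hf]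
    apply Real.exp_le_exp.mpr
    rw [neg_div]
    have h1 : 0 ≤ (∑ t ∈ Finset.Icc 1 T,
        pinball α (y t) (min (max (∑ i, x t i * φ i) A) B)) / Real.sqrt T := by
      apply div_nonneg _ hsT.le
      exact Finset.sum_nonneg fun t _ => pinball_nonneg hα _ _
    linarith
  have hg_int : Integrable g := by
    rw [hg]
    apply Integrable.const_mul
    exact Integrable.fintype_prod (f := fun i u => Real.exp (-b * |u - θ i|))
      (fun i => (integrable_exp_neg_mul_abs_aux hb0).comp_sub_right (θ i))
  -- integral of g
  have hg_val : (∫ φ : Fin (p + 1) → ℝ, g φ) = C * (2 / b) ^ (p + 1) := by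
    rw [hg, integral_const_mul]
    congr 1
    rw [MeasureTheory.integral_fintype_prod_volume_eq_prod (ι := Fin (p + 1))
      (f := fun i u => Real.exp (-b * |u - θ i|))]
    have : ∀ i : Fin (p + 1), (∫ u : ℝ, Real.exp (-b * |u - θ i|)) = 2 / b := by
      intro i
      rw [integral_sub_right_eq_self (fun u => Real.exp (-b * |u|)) (θ i)]
      exact integral_exp_neg_mul_abs_aux hb0
    rw [Finset.prod_congr rfl fun i _ => this i, Finset.prod_const]
    simp
  -- integral comparison
  have hIf : C * (2 / b) ^ (p + 1) ≤ ∫ φ : Fin (p + 1) → ℝ, f φ := by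
    rw [← hg_val]
    exact integral_mono hg_int hf_int hge
  set I : ℝ := ∫ φ : Fin (p + 1) → ℝ, f φ with hI
  have hpos : (0 : ℝ) < C * (2 / b) ^ (p + 1) := by positivity
  have hI0 : 0 < I := lt_of_lt_of_le hpos hIf
  -- the log bound
  have hfrac : b / a = 1 + Real.sqrt T / a * M := by
    rw [hbdef]; field_simp; ring
  have key : -Real.log ((a / 2) ^ (p + 1) * I)
      ≤ Lθ / Real.sqrt T + a * nθ + (p + 1 : ℝ) * Real.log (1 + Real.sqrt T / a * M) := by
    have h1 : C * (a / b) ^ (p + 1) ≤ (a / 2) ^ (p + 1) * I := by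
      have hcomb : ((a : ℝ) / 2) ^ (p + 1) * (2 / b) ^ (p + 1) = (a / b) ^ (p + 1) := by
        rw [← mul_pow]
        congr 1
        field_simp
      calc C * (a / b) ^ (p + 1) = (a / 2) ^ (p + 1) * (C * (2 / b) ^ (p + 1)) := by
            rw [← hcomb]; ring
        _ ≤ (a / 2) ^ (p + 1) * I := by
            apply mul_le_mul_of_nonneg_left hIf (by positivity)
    have h2 : 0 < C * (a / b) ^ (p + 1) := by positivity
    have h3 : Real.log (C * (a / b) ^ (p + 1)) ≤ Real.log ((a / 2) ^ (p + 1) * I) :=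
      Real.log_le_log h2 h1
    have h4 : Real.log (C * (a / b) ^ (p + 1))
        = -(Lθ / Real.sqrt T + a * nθ) - (p + 1 : ℝ) * Real.log (b / a) := by
      rw [Real.log_mul hC0.ne' (by positivity), hC, Real.log_exp,
        Real.log_pow]
      have : Real.log (a / b) = -Real.log (b / a) := by
        rw [← Real.log_inv]
        congr 1
        field_simp
      rw [this]
      push_cast
      ring
    rw [← hfrac]
    linarith [neg_le_neg h3, h4.symm.le]
  -- conclude part 1
  have part1 : LT ≤ Lθ + Real.sqrt T * (a * nθ)
      + Real.sqrt T * ((p + 1 : ℝ) * Real.log (1 + Real.sqrt T / a * M) + (B - A) ^ 2) := by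
    have step : LT ≤ Real.sqrt T *
        (Lθ / Real.sqrt T + a * nθ + (p + 1 : ℝ) * Real.log (1 + Real.sqrt T / a * M)
          + (B - A) ^ 2) := by
      refine hLT.trans ?_
      apply mul_le_mul_of_nonneg_left _ hsT.le
      linarith [key]
    calc LT ≤ Real.sqrt T *
        (Lθ / Real.sqrt T + a * nθ + (p + 1 : ℝ) * Real.log (1 + Real.sqrt T / a * M)
          + (B - A) ^ 2) := step
      _ = Lθ + Real.sqrt T * (a * nθ)
          + Real.sqrt T * ((p + 1 : ℝ) * Real.log (1 + Real.sqrt T / a * M)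
            + (B - A) ^ 2) := by
          rw [mul_add, mul_add, mul_add, mul_div_cancel₀ _ hsT.ne']
          ring
  refine ⟨part1, ?_⟩
  -- part 2
  have h5 : LT - Lθ ≤ Real.sqrt T * (a * nθ)
      + Real.sqrt T * ((p + 1 : ℝ) * Real.log (1 + Real.sqrt T / a * M) + (B - A) ^ 2) := by
    linarith [part1]
  calc (LT - Lθ) / (T : ℝ)
      ≤ (Real.sqrt T * (a * nθ)
          + Real.sqrt T * ((p + 1 : ℝ) * Real.log (1 + Real.sqrt T / a * M)
            + (B - A) ^ 2)) / (T : ℝ) := by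
        exact (div_le_div_iff_of_pos_right hT0).mpr h5
    _ = (1 / Real.sqrt T) * (a * nθ)
        + (1 / Real.sqrt T) * ((p + 1 : ℝ) * Real.log (1 + Real.sqrt T / a * M)
          + (B - A) ^ 2) := by
        have hdivT : ∀ c : ℝ, Real.sqrt T * c / (T : ℝ) = 1 / Real.sqrt T * c := by
          intro c
          calc Real.sqrt T * c / (T : ℝ)
              = Real.sqrt T * c / (Real.sqrt T * Real.sqrt T) := by rw [hTs]
            _ = c / Real.sqrt T := mul_div_mul_left _ _ hsT.ne'
            _ = 1 / Real.sqrt T * c := by rw [one_div, inv_mul_eq_div]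
        rw [add_div, hdivT, hdivT]
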